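/- For n ≥ 2, p ∈ (0,1) and all θ ≥ 0, the moment generating function M(θ) = E exp(θ(Y-μ)/σ) of the standardized number of isolated vertices satisfies M(θ) ≤ exp(H(θ)), where H(θ) = (μ/(2σ²)) ∫₀^θ s γ_{s/σ} ds and γ_s = e^s (p e^s + 1 - p)^{n-2} (n p e^s + 1 - p) + (n-1)p + 1. -/

import Mathlib

open MeasureTheory ProbabilityTheory Real Finset

noncomputable section

namespace ErdosRenyiIsolated

/-- Index set for the potential edges of a graph on `Fin n`. -/
abbrev EdgeIdx (n : ℕ) := {e : Fin n × Fin n // e.1 < e.2}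

/-- Adjacency relation of the random graph encoded by `ω` : `u` and `v` are adjacent
if the corresponding edge indicator is `true`. -/
def adj {n : ℕ} (ω : EdgeIdx n → Bool) (u v : Fin n) : Prop :=
  if h : u < v then ω ⟨(u, v), h⟩ = true
  else if h' : v < u then ω ⟨(v, u), h'⟩ = true
  else False

instance {n : ℕ} (ω : EdgeIdx n → Bool) (u v : Fin n) : Decidable (adj ω u v) := by
  unfold adj
  split
  · exact inferInstance
  · split
    · exact inferInstance
    · exact inferInstance

/-- Degree of vertex `v` in the graph encoded by `ω`. -/
def deg {n : ℕ} (ω : EdgeIdx n → Bool) (v : Fin n) : ℕ :=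
  (Finset.univ.filter fun w => adj ω v w).card

/-- The number of isolated vertices of the graph encoded by `ω`. -/
def isolCount {n : ℕ} (ω : EdgeIdx n → Bool) : ℕ :=
  (Finset.univ.filter fun v => deg ω v = 0).card

/-- The Bernoulli(p) measure on `Bool`. -/
def bern (p : ℝ) : Measure Bool :=
  ENNReal.ofReal p • Measure.dirac true + ENNReal.ofReal (1 - p) • Measure.dirac false

instance (p : ℝ) : IsFiniteMeasure (bern p) := by
  constructor
  have h : bern p Set.univ ≤ ENNReal.ofReal p + ENNReal.ofReal (1 - p) := by
    simp [bern]
  exact lt_of_le_of_lt h (ENNReal.add_lt_top.mpr ⟨ENNReal.ofReal_lt_top, ENNReal.ofReal_lt_top⟩)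

/-- The Erdős–Rényi random graph measure `G(n,p)`: the edge indicators are i.i.d.
Bernoulli(p). -/
def gnp (n : ℕ) (p : ℝ) : Measure (EdgeIdx n → Bool) :=
  Measure.pi fun _ => bern p

/-- The Erdős–Rényi measure together with an independent uniformly chosen vertex. -/
def gnpV (n : ℕ) (p : ℝ) : Measure ((EdgeIdx n → Bool) × Fin n) :=
  (gnp n p).prod (uniformOn (Set.univ : Set (Fin n)))

/-- Adjacency in the graph obtained by deleting all edges incident to `v'`. -/
def adjDel {n : ℕ} (ω : EdgeIdx n → Bool) (v' u v : Fin n) : Prop :=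
  adj ω u v ∧ u ≠ v' ∧ v ≠ v'

instance {n : ℕ} (ω : EdgeIdx n → Bool) (v' u v : Fin n) : Decidable (adjDel ω v' u v) := by
  unfold adjDel; exact inferInstance

/-- Degree of `v` in the graph `ω` with all edges incident to `v'` deleted. -/
def degDel {n : ℕ} (ω : EdgeIdx n → Bool) (v' v : Fin n) : ℕ :=
  (Finset.univ.filter fun w => adjDel ω v' v w).card

/-- Number of isolated vertices in the graph `ω` with all edges incident to `v'` deleted. -/
def isolCountDel {n : ℕ} (ω : EdgeIdx n → Bool) (v' : Fin n) : ℕ :=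
  (Finset.univ.filter fun v => degDel ω v' v = 0).card

section Part1
variable {n : ℕ}

/-- weight of a single edge indicator value -/
def wt (p : ℝ) (b : Bool) : ℝ := if b then p else 1 - p

/-- weight of a configuration -/
def W (p : ℝ) (ω : EdgeIdx n → Bool) : ℝ := ∏ e, wt p (ω e)

lemma wt_nonneg {p : ℝ} (hp : p ∈ Set.Ioo (0:ℝ) 1) (b : Bool) : 0 ≤ wt p b := by
  cases b <;> simp [wt] <;> linarith [hp.1, hp.2]

lemma W_nonneg {p : ℝ} (hp : p ∈ Set.Ioo (0:ℝ) 1) (ω : EdgeIdx n → Bool) : 0 ≤ W p ω :=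
  Finset.prod_nonneg fun e _ => wt_nonneg hp _

lemma bern_singleton {p : ℝ} (b : Bool) :
    bern p {b} = ENNReal.ofReal (wt p b) := by
  cases b <;>
    simp [bern, wt, Measure.dirac_apply, Set.indicator_apply]

lemma isProbability_bern {p : ℝ} (hp : p ∈ Set.Ioo (0:ℝ) 1) : IsProbabilityMeasure (bern p) := by
  constructor
  have : (Set.univ : Set Bool) = {true} ∪ {false} := by
    ext b; cases b <;> simp
  rw [this, measure_union (by simp) (by simp), bern_singleton, bern_singleton]
  rw [← ENNReal.ofReal_add (by simp [wt]; linarith [hp.1]) (by simp [wt]; linarith [hp.2])]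
  simp [wt]

lemma isProbability_gnp {p : ℝ} (hp : p ∈ Set.Ioo (0:ℝ) 1) :
    IsProbabilityMeasure (gnp n p) := by
  haveI := isProbability_bern hp
  exact MeasureTheory.Measure.pi.instIsProbabilityMeasure _

lemma gnp_singleton {p : ℝ} (hp : p ∈ Set.Ioo (0:ℝ) 1) (ω : EdgeIdx n → Bool) :
    gnp n p {ω} = ENNReal.ofReal (W p ω) := by
  have h1 : ({ω} : Set (EdgeIdx n → Bool)) = Set.pi Set.univ (fun e => {ω e}) := by
    rw [Set.univ_pi_singleton]
  rw [gnp, h1, Measure.pi_pi]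
  simp_rw [bern_singleton]
  rw [← ENNReal.ofReal_prod_of_nonneg (fun e _ => wt_nonneg hp _)]
  rfl

lemma integral_gnp {p : ℝ} (hp : p ∈ Set.Ioo (0:ℝ) 1) (f : (EdgeIdx n → Bool) → ℝ) :
    ∫ ω, f ω ∂(gnp n p) = ∑ ω, W p ω * f ω := by
  haveI := isProbability_gnp (n := n) hp
  rw [integral_fintype .of_finite]
  refine Finset.sum_congr rfl fun ω _ => ?_
  rw [measureReal_def, gnp_singleton hp, ENNReal.toReal_ofReal (W_nonneg hp ω), smul_eq_mul]

end Part1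
section Part2
variable {n : ℕ}

lemma adj_of_lt (ω : EdgeIdx n → Bool) {u w : Fin n} (h : u < w) :
    adj ω u w ↔ ω ⟨(u,w), h⟩ = true := by
  unfold adj; rw [dif_pos h]

lemma adj_of_gt (ω : EdgeIdx n → Bool) {u w : Fin n} (h : w < u) :
    adj ω u w ↔ ω ⟨(w,u), h⟩ = true := by
  unfold adj; rw [dif_neg (lt_asymm h), dif_pos h]

lemma not_adj_self (ω : EdgeIdx n → Bool) (u : Fin n) : ¬ adj ω u u := by
  unfold adj; simp

lemma adj_symm (ω : EdgeIdx n → Bool) {u w : Fin n} (h : adj ω u w) : adj ω w u := by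
  rcases lt_trichotomy u w with h1 | h1 | h1
  · rw [adj_of_lt ω h1] at h; rw [adj_of_gt ω h1]; exact h
  · subst h1; exact h
  · rw [adj_of_gt ω h1] at h; rw [adj_of_lt ω h1]; exact h

lemma adj_ne (ω : EdgeIdx n → Bool) {u w : Fin n} (h : adj ω u w) : u ≠ w := by
  rintro rfl; exact not_adj_self ω u h

lemma adj_mono {ω ω' : EdgeIdx n → Bool} (h : ω ≤ ω') {u w : Fin n} (ha : adj ω u w) :
    adj ω' u w := by
  rcases lt_trichotomy u w with h1 | h1 | h1
  · rw [adj_of_lt ω h1] at ha; rw [adj_of_lt ω' h1]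
    exact Bool.le_iff_imp.mp (h _) ha
  · subst h1; exact absurd ha (not_adj_self ω u)
  · rw [adj_of_gt ω h1] at ha; rw [adj_of_gt ω' h1]
    exact Bool.le_iff_imp.mp (h _) ha

/-- Edges incident to `v`. -/
def Sv (v : Fin n) : Finset (EdgeIdx n) :=
  Finset.univ.filter (fun e => e.1.1 = v ∨ e.1.2 = v)

lemma adj_update {ω : EdgeIdx n → Bool} {v : Fin n} {e₀ : EdgeIdx n} (he₀ : e₀ ∈ Sv v)
    (b : Bool) {u w : Fin n} (hu : u ≠ v) (hw : w ≠ v) :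
    adj (Function.update ω e₀ b) u w ↔ adj ω u w := by
  simp only [Sv, Finset.mem_filter] at he₀
  rcases lt_trichotomy u w with h1 | h1 | h1
  · rw [adj_of_lt _ h1, adj_of_lt ω h1, Function.update_of_ne]
    rintro rfl
    rcases he₀.2 with h2 | h2 <;> simp_all
  · subst h1; constructor <;> (intro h; exact absurd h (not_adj_self _ u))
  · rw [adj_of_gt _ h1, adj_of_gt ω h1, Function.update_of_ne]
    rintro rfl
    rcases he₀.2 with h2 | h2 <;> simp_all

lemma deg_eq_card (ω : EdgeIdx n → Bool) (v : Fin n) :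
    deg ω v = ((Sv v).filter (fun e => ω e = true)).card := by
  rw [deg]
  refine Finset.card_bij (fun w hw => if h : v < w then (⟨(v,w), h⟩ : EdgeIdx n)
    else ⟨(w,v), ?_⟩) ?_ ?_ ?_
  · -- key : w < v
    simp only [Finset.mem_filter] at hw
    rcases lt_trichotomy v w with h1 | h1 | h1
    · exact absurd h1 h
    · exact absurd (h1 ▸ hw.2) (not_adj_self ω v)
    · exact h1
  · intro w hw
    simp only [Finset.mem_filter, Finset.mem_univ, true_and] at hw ⊢
    split
    · next h =>
        refine ⟨?_, ?_⟩
        · simp [Sv]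
        · exact (adj_of_lt ω h).mp hw
    · next h =>
        refine ⟨?_, ?_⟩
        · simp [Sv]
        · have h1 : w < v := by
            rcases lt_trichotomy v w with h1 | h1 | h1
            · exact absurd h1 h
            · exact absurd (h1 ▸ hw) (not_adj_self ω v)
            · exact h1
          exact (adj_of_gt ω h1).mp hw
  · intro w₁ hw₁ w₂ hw₂ heq
    simp only [Finset.mem_filter, Finset.mem_univ, true_and] at hw₁ hw₂
    by_cases h1 : v < w₁ <;> by_cases h2 : v < w₂
    · rw [dif_pos h1, dif_pos h2] at heq
      simpa [Subtype.ext_iff, Prod.ext_iff] using heq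
    · rw [dif_pos h1, dif_neg h2] at heq
      obtain ⟨ha, hb⟩ : v = w₂ ∧ w₁ = v := by
        simpa [Subtype.ext_iff, Prod.ext_iff] using heq
      exact absurd (ha ▸ hw₂) (not_adj_self ω v)
    · rw [dif_neg h1, dif_pos h2] at heq
      obtain ⟨ha, hb⟩ : w₁ = v ∧ v = w₂ := by
        simpa [Subtype.ext_iff, Prod.ext_iff] using heq
      exact absurd (ha ▸ hw₁) (not_adj_self ω v)
    · rw [dif_neg h1, dif_neg h2] at heq
      simpa [Subtype.ext_iff, Prod.ext_iff] using heq
  · rintro ⟨⟨a, b⟩, hab⟩ he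
    simp only [Sv, Finset.mem_filter, Finset.mem_univ, true_and] at he
    obtain ⟨hor, htrue⟩ := he
    rcases hor with rfl | rfl
    · refine ⟨b, ?_, ?_⟩
      · simp only [Finset.mem_filter, Finset.mem_univ, true_and]
        exact (adj_of_lt ω hab).mpr htrue
      · rw [dif_pos hab]
    · refine ⟨a, ?_, ?_⟩
      · simp only [Finset.mem_filter, Finset.mem_univ, true_and]
        exact (adj_of_gt ω hab).mpr htrue
      · rw [dif_neg (lt_asymm hab)]

lemma card_Sv (hn : 2 ≤ n) (v : Fin n) : (Sv v).card = n - 1 := by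
  have h1 := deg_eq_card (n := n) (fun _ => true) v
  have h2 : ((Sv v).filter (fun e => (fun _ => true) e = true)) = Sv v := by
    simp
  rw [h2] at h1
  rw [← h1, deg]
  have h3 : (Finset.univ.filter fun w => adj (fun _ => true) v w) = Finset.univ.erase v := by
    ext w
    simp only [Finset.mem_filter, Finset.mem_univ, true_and, Finset.mem_erase, and_true]
    constructor
    · intro h; exact (adj_ne _ (adj_symm _ h))
    · intro h
      rcases lt_trichotomy v w with h1 | h1 | h1
      · rw [adj_of_lt _ h1]
      · exact absurd h1.symm h
      · rw [adj_of_gt _ h1]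
  rw [h3, Finset.card_erase_of_mem (Finset.mem_univ v)]
  simp

end Part2
section Part3
variable {n : ℕ}

lemma sum_prod_eq (F : EdgeIdx n → Bool → ℝ) :
    ∑ ω : EdgeIdx n → Bool, ∏ e, F e (ω e) = ∏ e, (F e true + F e false) := by
  have h : ∀ e : EdgeIdx n, F e true + F e false = ∑ b, F e b := by
    intro e; rw [Fintype.sum_bool]
  simp_rw [h]
  rw [Finset.prod_univ_sum]
  rw [Fintype.piFinset_univ]

lemma sum_W_prod (p : ℝ) (S : Finset (EdgeIdx n)) (c : EdgeIdx n → Bool → ℝ) :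
    ∑ ω : EdgeIdx n → Bool, W p ω * ∏ e ∈ S, c e (ω e)
      = ∏ e ∈ S, (p * c e true + (1 - p) * c e false) := by
  have key : ∀ ω : EdgeIdx n → Bool, W p ω * ∏ e ∈ S, c e (ω e)
      = ∏ e, (wt p (ω e) * (if e ∈ S then c e (ω e) else 1)) := by
    intro ω
    rw [Finset.prod_mul_distrib, W]
    congr 1
    rw [← Finset.prod_filter, Finset.filter_mem_eq_inter, Finset.univ_inter]
  simp_rw [key]
  rw [sum_prod_eq (fun e b => wt p b * (if e ∈ S then c e b else 1))]
  have h2 : ∀ e : EdgeIdx n,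
      (wt p true * (if e ∈ S then c e true else 1) + wt p false * (if e ∈ S then c e false else 1))
      = if e ∈ S then (p * c e true + (1 - p) * c e false) else 1 := by
    intro e
    by_cases h : e ∈ S <;> simp [h, wt] <;> ring
  simp_rw [h2]
  rw [← Finset.prod_filter, Finset.filter_mem_eq_inter, Finset.univ_inter]

lemma sum_W (p : ℝ) : ∑ ω : EdgeIdx n → Bool, W p ω = 1 := by
  have := sum_W_prod (n := n) p ∅ (fun _ _ => 1)
  simpa using this

lemma pow_deg_eq (ω : EdgeIdx n → Bool) (v : Fin n) (x : ℝ) :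
    x ^ (deg ω v) = ∏ e ∈ Sv v, (if ω e = true then x else 1) := by
  rw [deg_eq_card, Finset.prod_ite, Finset.prod_const, Finset.prod_const, one_pow, mul_one]

lemma moment_pow (p : ℝ) (v : Fin n) (x : ℝ) :
    ∑ ω : EdgeIdx n → Bool, W p ω * x ^ (deg ω v)
      = (p * x + (1 - p)) ^ ((Sv v).card) := by
  simp_rw [pow_deg_eq _ v x]
  rw [sum_W_prod p (Sv v) (fun _ b => if b = true then x else 1)]
  simp

lemma ind_mul_pow_deg_eq (ω : EdgeIdx n → Bool) (v : Fin n) {e₀ : EdgeIdx n} (he₀ : e₀ ∈ Sv v)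
    (x : ℝ) :
    (if ω e₀ = true then (1:ℝ) else 0) * x ^ (deg ω v)
      = ∏ e ∈ Sv v, ((if e = e₀ then (if ω e = true then (1:ℝ) else 0) else 1)
          * (if ω e = true then x else 1)) := by
  rw [Finset.prod_mul_distrib, Finset.prod_ite_eq' (Sv v) e₀
    (fun e => if ω e = true then (1:ℝ) else 0), if_pos he₀, ← pow_deg_eq]

lemma moment_deg_pow (p : ℝ) (v : Fin n) (x : ℝ) :
    ∑ ω : EdgeIdx n → Bool, W p ω * ((deg ω v : ℝ) * x ^ (deg ω v))
      = ((Sv v).card : ℝ) * (p * x) * (p * x + (1 - p)) ^ ((Sv v).card - 1) := by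
  have hdeg : ∀ ω : EdgeIdx n → Bool, (deg ω v : ℝ)
      = ∑ e₀ ∈ Sv v, (if ω e₀ = true then (1:ℝ) else 0) := by
    intro ω
    rw [deg_eq_card, Finset.card_filter]
    push_cast
    rfl
  simp_rw [hdeg, Finset.sum_mul, Finset.mul_sum]
  rw [Finset.sum_comm]
  have key : ∀ e₀ ∈ Sv v, ∑ ω : EdgeIdx n → Bool,
      W p ω * ((if ω e₀ = true then (1:ℝ) else 0) * x ^ (deg ω v))
      = (p * x) * (p * x + (1 - p)) ^ ((Sv v).card - 1) := by
    intro e₀ he₀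
    have h1 : ∀ ω : EdgeIdx n → Bool, (if ω e₀ = true then (1:ℝ) else 0) * x ^ (deg ω v)
        = ∏ e ∈ Sv v, ((if e = e₀ then (if ω e = true then (1:ℝ) else 0) else 1)
            * (if ω e = true then x else 1)) := fun ω => ind_mul_pow_deg_eq ω v he₀ x
    simp_rw [h1]
    rw [sum_W_prod p (Sv v) (fun e b => (if e = e₀ then (if b = true then (1:ℝ) else 0) else 1)
      * (if b = true then x else 1))]
    rw [← Finset.mul_prod_erase (Sv v) _ he₀]
    have h2 : ∀ e ∈ (Sv v).erase e₀,
        (p * ((if e = e₀ then (if (true:Bool) = true then (1:ℝ) else 0) else 1) * (if (true:Bool) = true then x else 1))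
          + (1 - p) * ((if e = e₀ then (if (false:Bool) = true then (1:ℝ) else 0) else 1) * (if (false:Bool) = true then x else 1)))
        = p * x + (1 - p) := by
      intro e he
      have : e ≠ e₀ := (Finset.mem_erase.mp he).1
      simp [this]
    rw [Finset.prod_congr rfl h2, Finset.prod_const, Finset.card_erase_of_mem he₀]
    simp
  rw [Finset.sum_congr rfl key, Finset.sum_const, nsmul_eq_mul]
  ring

end Part3
section Part4
variable {n : ℕ}

lemma sum_partition (e₀ : EdgeIdx n) (F : (EdgeIdx n → Bool) → ℝ) :
    ∑ ω : EdgeIdx n → Bool, F ω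
      = ∑ ω ∈ Finset.univ.filter (fun ω : EdgeIdx n → Bool => ω e₀ = false),
          (F ω + F (Function.update ω e₀ true)) := by
  rw [← Finset.sum_filter_add_sum_filter_not Finset.univ
    (fun ω : EdgeIdx n → Bool => ω e₀ = false) F, Finset.sum_add_distrib]
  congr 1
  refine Finset.sum_nbij' (fun ω => Function.update ω e₀ false)
    (fun ω => Function.update ω e₀ true) ?_ ?_ ?_ ?_ ?_
  · intro ω hω
    simp only [Finset.mem_filter, Finset.mem_univ, true_and] at hω ⊢
    simp
  · intro ω hω
    simp only [Finset.mem_filter, Finset.mem_univ, true_and] at hω ⊢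
    simp
  · intro ω hω
    simp only [Finset.mem_filter, Finset.mem_univ, true_and] at hω
    funext e
    by_cases h : e = e₀
    · subst h; simp [(by simpa using hω : ω e = true)]
    · simp [Function.update_of_ne h]
  · intro ω hω
    simp only [Finset.mem_filter, Finset.mem_univ, true_and] at hω
    funext e
    by_cases h : e = e₀
    · subst h; simp [hω]
    · simp [Function.update_of_ne h]
  · intro ω hω
    simp only [Finset.mem_filter, Finset.mem_univ, true_and] at hω
    have hω' : ω e₀ = true := by simpa using hω
    rw [Function.update_idem]
    conv_lhs => rw [show ω = Function.update ω e₀ true by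
      rw [← hω']; exact (Function.update_eq_self e₀ ω).symm]

lemma sum_ind_invariant_one (p : ℝ) (e₀ : EdgeIdx n) (g : (EdgeIdx n → Bool) → ℝ)
    (hg : ∀ ω b, g (Function.update ω e₀ b) = g ω) :
    ∑ ω : EdgeIdx n → Bool, W p ω * ((if ω e₀ = false then (1:ℝ) else 0) * g ω)
      = (1 - p) * ∑ ω : EdgeIdx n → Bool, W p ω * g ω := by
  set W' : (EdgeIdx n → Bool) → ℝ := fun ω => ∏ e ∈ Finset.univ.erase e₀, wt p (ω e) with hW'
  have hWsplit : ∀ ω : EdgeIdx n → Bool, W p ω = wt p (ω e₀) * W' ω := fun ω =>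
    (Finset.mul_prod_erase Finset.univ _ (Finset.mem_univ e₀)).symm
  have hW'upd : ∀ (ω : EdgeIdx n → Bool) b, W' (Function.update ω e₀ b) = W' ω := by
    intro ω b
    refine Finset.prod_congr rfl fun e he => ?_
    rw [Function.update_of_ne (Finset.mem_erase.mp he).1]
  rw [sum_partition e₀ (fun ω => W p ω * ((if ω e₀ = false then (1:ℝ) else 0) * g ω)),
    sum_partition e₀ (fun ω => W p ω * g ω), Finset.mul_sum]
  refine Finset.sum_congr rfl fun ω hω => ?_
  simp only [Finset.mem_filter, Finset.mem_univ, true_and] at hω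
  rw [hWsplit ω, hWsplit (Function.update ω e₀ true), hW'upd, hg,
    Function.update_self, hω]
  simp [wt]
  ring

lemma sum_ind_invariant (p : ℝ) (S : Finset (EdgeIdx n)) (g : (EdgeIdx n → Bool) → ℝ)
    (hg : ∀ ω, ∀ e ∈ S, ∀ b, g (Function.update ω e b) = g ω) :
    ∑ ω : EdgeIdx n → Bool, W p ω * ((∏ e ∈ S, if ω e = false then (1:ℝ) else 0) * g ω)
      = (1 - p) ^ S.card * ∑ ω : EdgeIdx n → Bool, W p ω * g ω := by
  classical
  induction S using Finset.induction_on with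
  | empty => simp
  | @insert e₀ S he₀ ih =>
      have hg' : ∀ ω, ∀ e ∈ S, ∀ b, g (Function.update ω e b) = g ω := by
        intro ω e he b; exact hg ω e (Finset.mem_insert_of_mem he) b
      have hstep : ∑ ω : EdgeIdx n → Bool,
          W p ω * ((∏ e ∈ insert e₀ S, if ω e = false then (1:ℝ) else 0) * g ω)
          = ∑ ω : EdgeIdx n → Bool, W p ω * ((if ω e₀ = false then (1:ℝ) else 0) *
              ((∏ e ∈ S, if ω e = false then (1:ℝ) else 0) * g ω)) := by
        refine Finset.sum_congr rfl fun ω _ => ?_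
        rw [Finset.prod_insert he₀]
        ring
      rw [hstep, sum_ind_invariant_one p e₀
        (fun ω => (∏ e ∈ S, if ω e = false then (1:ℝ) else 0) * g ω) ?_]
      · rw [ih hg', Finset.card_insert_of_notMem he₀, pow_succ]
        ring
      · intro ω b
        rw [hg ω e₀ (Finset.mem_insert_self e₀ S) b]
        congr 1
        refine Finset.prod_congr rfl fun e he => ?_
        rw [Function.update_of_ne (by rintro rfl; exact he₀ he)]

lemma isolCountDel_update {ω : EdgeIdx n → Bool} {v : Fin n} {e₀ : EdgeIdx n}
    (he₀ : e₀ ∈ Sv v) (b : Bool) :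
    isolCountDel (Function.update ω e₀ b) v = isolCountDel ω v := by
  have hadj : ∀ u w : Fin n, adjDel (Function.update ω e₀ b) v u w ↔ adjDel ω v u w := by
    intro u w
    unfold adjDel
    constructor
    · rintro ⟨ha, hu, hw⟩; exact ⟨(adj_update he₀ b hu hw).mp ha, hu, hw⟩
    · rintro ⟨ha, hu, hw⟩; exact ⟨(adj_update he₀ b hu hw).mpr ha, hu, hw⟩
  have hdeg : ∀ u : Fin n, degDel (Function.update ω e₀ b) v u = degDel ω v u := by
    intro u
    unfold degDel
    congr 1
    ext w
    simp [hadj u w]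
  unfold isolCountDel
  congr 1
  ext u
  simp [hdeg u]

lemma deg_zero_iff (ω : EdgeIdx n → Bool) (v : Fin n) :
    deg ω v = 0 ↔ ∀ e ∈ Sv v, ω e = false := by
  rw [deg_eq_card, Finset.card_eq_zero, Finset.filter_eq_empty_iff]
  simp

lemma isolCount_le_del (ω : EdgeIdx n → Bool) (v : Fin n) :
    isolCount ω ≤ isolCountDel ω v := by
  unfold isolCount isolCountDel
  apply Finset.card_le_card
  intro u hu
  simp only [Finset.mem_filter, Finset.mem_univ, true_and] at hu ⊢
  unfold degDel
  rw [Finset.card_eq_zero, Finset.filter_eq_empty_iff]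
  intro w _
  intro hcon
  have : adj ω u w := hcon.1
  have h0 : (Finset.univ.filter fun w' => adj ω u w') = ∅ := by
    rw [← Finset.card_eq_zero]; exact hu
  have : w ∈ Finset.univ.filter fun w' => adj ω u w' := by
    simp [this]
  rw [h0] at this
  exact absurd this (Finset.notMem_empty w)

lemma isolCountDel_eq_of_deg_zero {ω : EdgeIdx n → Bool} {v : Fin n} (h : deg ω v = 0) :
    isolCountDel ω v = isolCount ω := by
  have hdeg0 : ∀ w, ¬ adj ω v w := by
    unfold deg at h
    rw [Finset.card_eq_zero, Finset.filter_eq_empty_iff] at h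
    exact fun w => h (Finset.mem_univ w)
  have hiff : ∀ u, (degDel ω v u = 0 ↔ deg ω u = 0) := by
    intro u
    unfold degDel deg
    rw [Finset.card_eq_zero, Finset.card_eq_zero, Finset.filter_eq_empty_iff,
      Finset.filter_eq_empty_iff]
    constructor
    · intro hu w _ hadj
      by_cases huv : u = v
      · exact hdeg0 w (huv ▸ hadj)
      · by_cases hwv : w = v
        · exact hdeg0 u (adj_symm ω (hwv ▸ hadj))
        · exact hu (Finset.mem_univ w) ⟨hadj, huv, hwv⟩
    · intro hu w _ hadj
      exact hu (Finset.mem_univ w) hadj.1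
  unfold isolCountDel isolCount
  congr 1
  ext u
  simp [hiff u]

lemma isolCountDel_le (ω : EdgeIdx n → Bool) (v : Fin n) :
    isolCountDel ω v ≤ isolCount ω + deg ω v + 1 := by
  unfold isolCountDel isolCount deg
  have hsub : (Finset.univ.filter fun u => degDel ω v u = 0)
      ⊆ ((Finset.univ.filter fun u => (Finset.univ.filter fun w => adj ω u w).card = 0)
          ∪ (Finset.univ.filter fun w => adj ω v w)) ∪ {v} := by
    intro u hu
    simp only [Finset.mem_filter, Finset.mem_univ, true_and, Finset.mem_union,
      Finset.mem_singleton] at hu ⊢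
    by_cases huv : u = v
    · exact Or.inr huv
    · left
      by_cases hdeg : (Finset.univ.filter fun w => adj ω u w).card = 0
      · exact Or.inl hdeg
      · right
        rw [Finset.card_eq_zero, Finset.filter_eq_empty_iff] at hdeg
        push_neg at hdeg
        obtain ⟨w, -, hadj⟩ := hdeg
        unfold degDel at hu
        rw [Finset.card_eq_zero, Finset.filter_eq_empty_iff] at hu
        by_cases hwv : w = v
        · exact adj_symm ω (hwv ▸ hadj)
        · exact absurd ⟨hadj, huv, hwv⟩ (hu (Finset.mem_univ w))
  refine (Finset.card_le_card hsub).trans ?_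
  refine (Finset.card_union_le _ _).trans ?_
  have h2 := Finset.card_union_le
    (Finset.univ.filter fun u : Fin n => (Finset.univ.filter fun w => adj ω u w).card = 0)
    (Finset.univ.filter fun w => adj ω v w)
  rw [Finset.card_singleton]
  omega

lemma deg_mono {ω ω' : EdgeIdx n → Bool} (h : ω ≤ ω') (v : Fin n) : deg ω v ≤ deg ω' v := by
  unfold deg
  apply Finset.card_le_card
  intro w hw
  simp only [Finset.mem_filter, Finset.mem_univ, true_and] at hw ⊢
  exact adj_mono h hw

lemma isolCount_anti {ω ω' : EdgeIdx n → Bool} (h : ω ≤ ω') : isolCount ω' ≤ isolCount ω := by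
  unfold isolCount
  apply Finset.card_le_card
  intro u hu
  simp only [Finset.mem_filter, Finset.mem_univ, true_and] at hu ⊢
  have := deg_mono h u
  omega

end Part4
section Part5
variable {n : ℕ}

lemma W_supermod {p : ℝ} (a b : EdgeIdx n → Bool) :
    W p a * W p b = W p (a ⊓ b) * W p (a ⊔ b) := by
  unfold W
  rw [← Finset.prod_mul_distrib, ← Finset.prod_mul_distrib]
  refine Finset.prod_congr rfl fun e _ => ?_
  rw [Pi.inf_apply, Pi.sup_apply]
  have hff : (false ⊓ false : Bool) = false := by decide
  have hft : (false ⊓ true : Bool) = false := by decide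
  have htf : (true ⊓ false : Bool) = false := by decide
  have htt : (true ⊓ true : Bool) = true := by decide
  have sff : (false ⊔ false : Bool) = false := by decide
  have sft : (false ⊔ true : Bool) = true := by decide
  have stf : (true ⊔ false : Bool) = true := by decide
  have stt : (true ⊔ true : Bool) = true := by decide
  cases ha : a e <;> cases hb : b e <;>
    simp only [hff, hft, htf, htt, sff, sft, stf, stt] <;> ring

lemma harris {p : ℝ} (hp : p ∈ Set.Ioo (0:ℝ) 1) (f g : (EdgeIdx n → Bool) → ℝ)
    (hf0 : ∀ ω, 0 ≤ f ω) (hg0 : ∀ ω, 0 ≤ g ω) (hf : Monotone f) (hg : Antitone g) :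
    ∑ ω : EdgeIdx n → Bool, W p ω * (f ω * g ω)
      ≤ (∑ ω : EdgeIdx n → Bool, W p ω * f ω) * (∑ ω : EdgeIdx n → Bool, W p ω * g ω) := by
  classical
  set C : ℝ := g ⊥ with hC
  have hgC : ∀ ω, g ω ≤ C := fun ω => hg bot_le
  have hfkg := fkg f (fun ω => C - g ω) (W p) (fun ω => W_nonneg hp ω) (fun ω => hf0 ω)
    (fun ω => sub_nonneg.mpr (hgC ω)) hf (fun ω₁ ω₂ h12 => by
      simp only [sub_le_sub_iff_left]
      exact hg h12)
    (fun a b => le_of_eq (W_supermod a b))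
  have hWsum : ∑ ω : EdgeIdx n → Bool, W p ω = 1 := sum_W p
  have expand1 : ∑ ω : EdgeIdx n → Bool, W p ω * (C - g ω)
      = C - ∑ ω : EdgeIdx n → Bool, W p ω * g ω := by
    simp_rw [mul_sub]
    rw [Finset.sum_sub_distrib, ← Finset.sum_mul, hWsum, one_mul]
  have expand2 : ∑ ω : EdgeIdx n → Bool, W p ω * (f ω * (C - g ω))
      = C * (∑ ω : EdgeIdx n → Bool, W p ω * f ω)
        - ∑ ω : EdgeIdx n → Bool, W p ω * (f ω * g ω) := by
    have hpt : ∀ ω : EdgeIdx n → Bool, W p ω * (f ω * (C - g ω))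
        = C * (W p ω * f ω) - W p ω * (f ω * g ω) := fun ω => by ring
    simp_rw [hpt]
    rw [Finset.sum_sub_distrib, ← Finset.mul_sum]
  rw [expand1, expand2, hWsum, one_mul] at hfkg
  nlinarith [hfkg]

end Part5
section Part6
variable {n : ℕ}

lemma gamma_moment (hn : 2 ≤ n) (p : ℝ) (v : Fin n) (t : ℝ) :
    ∑ ω : EdgeIdx n → Bool,
        W p ω * (((deg ω v : ℝ) + 1) * (Real.exp (t * ((deg ω v : ℝ) + 1)) + 1))
      = Real.exp t * (p * Real.exp t + 1 - p) ^ (n - 2) * ((n : ℝ) * p * Real.exp t + 1 - p)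
        + ((n : ℝ) - 1) * p + 1 := by
  set x := Real.exp t with hx
  have hexp : ∀ d : ℕ, Real.exp (t * ((d : ℝ) + 1)) = x ^ (d + 1) := by
    intro d
    rw [hx, ← Real.exp_nat_mul]
    congr 1
    push_cast
    ring
  have hpt : ∀ ω : EdgeIdx n → Bool,
      W p ω * (((deg ω v : ℝ) + 1) * (Real.exp (t * ((deg ω v : ℝ) + 1)) + 1))
      = x * (W p ω * ((deg ω v : ℝ) * x ^ (deg ω v))) + x * (W p ω * x ^ (deg ω v))
        + W p ω * ((deg ω v : ℝ) * (1:ℝ) ^ (deg ω v)) + W p ω * (1:ℝ) ^ (deg ω v) := by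
    intro ω
    rw [hexp, pow_succ, one_pow]
    ring
  simp_rw [hpt]
  rw [Finset.sum_add_distrib, Finset.sum_add_distrib, Finset.sum_add_distrib,
    ← Finset.mul_sum, ← Finset.mul_sum, moment_pow, moment_deg_pow, moment_pow, moment_deg_pow,
    card_Sv hn]
  have h1 : (p * 1 + (1 - p)) = 1 := by ring
  rw [h1, one_pow, one_pow, mul_one]
  have h2 : n - 1 = (n - 2) + 1 := by omega
  have h3 : n - 1 - 1 = n - 2 := by omega
  have h4 : ((n - 1 : ℕ) : ℝ) = (n : ℝ) - 1 := by
    have : 1 ≤ n := by omega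
    push_cast [this]
    ring
  rw [h3, h4, h2, pow_succ]
  ring

lemma exp_aux {h : ℝ} (hh : 0 ≤ h) : Real.exp h - 1 ≤ h * (1 + Real.exp h) / 2 := by
  set F : ℝ → ℝ := fun y => y * (1 + Real.exp y) / 2 - Real.exp y + 1 with hF
  have hder : ∀ y : ℝ, HasDerivAt F ((1 + Real.exp y + y * Real.exp y) / 2 - Real.exp y) y := by
    intro y
    have h1 : HasDerivAt (fun y : ℝ => y * (1 + Real.exp y))
        (1 + Real.exp y + y * Real.exp y) y := by
      have := (hasDerivAt_id y).mul ((hasDerivAt_const y 1).add (Real.hasDerivAt_exp y))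
      exact this.congr_deriv (by simp only [id, Pi.add_apply]; ring)
    exact ((h1.div_const 2).sub (Real.hasDerivAt_exp y)).add_const 1
  have hmono : MonotoneOn F (Set.Ici 0) := by
    apply monotoneOn_of_deriv_nonneg (convex_Ici 0)
    · exact Continuous.continuousOn (by
        have : Differentiable ℝ F := fun y => (hder y).differentiableAt
        exact this.continuous)
    · intro y _
      exact (hder y).differentiableAt.differentiableWithinAt
    · intro y hy
      rw [(hder y).deriv]
      rw [interior_Ici] at hy
      have hy0 : 0 ≤ y := le_of_lt hy
      have key : (1 - y) * Real.exp y ≤ 1 := by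
        have h5 : 1 - y ≤ Real.exp (-y) := by
          have := Real.add_one_le_exp (-y)
          linarith
        have h6 := mul_le_mul_of_nonneg_right h5 (Real.exp_pos y).le
        rw [← Real.exp_add] at h6
        simpa using h6
      nlinarith [Real.exp_pos y]
  have h0 : F 0 ≤ F h := hmono (Set.mem_Ici.mpr le_rfl) (Set.mem_Ici.mpr hh) hh
  have hF0 : F 0 = 0 := by simp [hF]
  rw [hF0] at h0
  simp only [hF] at h0
  linarith

lemma exp_diff_le {a b : ℝ} (hab : a ≤ b) :
    Real.exp b - Real.exp a ≤ (b - a) * (Real.exp a + Real.exp b) / 2 := by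
  have h1 := exp_aux (sub_nonneg.mpr hab)
  have h2 : Real.exp b = Real.exp a * Real.exp (b - a) := by
    rw [← Real.exp_add]; congr 1; ring
  have h3 := mul_le_mul_of_nonneg_left h1 (Real.exp_pos a).le
  rw [h2]
  nlinarith [Real.exp_pos a, Real.exp_pos (b-a)]

lemma exp_bound {t Y Yv D : ℝ} (ht : 0 ≤ t) (h1 : Y ≤ Yv) (h2 : Yv ≤ Y + D) (hD : 0 ≤ D) :
    Real.exp (t * Yv) ≤ Real.exp (t * Y) + t / 2 * (D * (Real.exp (t * D) + 1))
      * Real.exp (t * Y) := by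
  have hab : t * Y ≤ t * Yv := mul_le_mul_of_nonneg_left h1 ht
  have h3 := exp_diff_le hab
  have h4 : Real.exp (t * Yv) ≤ Real.exp (t * D) * Real.exp (t * Y) := by
    rw [← Real.exp_add]
    apply Real.exp_le_exp.mpr
    nlinarith
  have h5 : t * Yv - t * Y ≤ t * D := by nlinarith
  have h6 : (t * Yv - t * Y) * (Real.exp (t * Y) + Real.exp (t * Yv))
      ≤ (t * D) * (Real.exp (t * Y) + Real.exp (t * D) * Real.exp (t * Y)) := by
    apply mul_le_mul h5 (add_le_add le_rfl h4) (by positivity) (by positivity)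
  nlinarith [h3, h6]

end Part6
section Part7
variable {n : ℕ}

/-- unnormalized mgf of the number of isolated vertices -/
def Lfun (p : ℝ) (n : ℕ) (t : ℝ) : ℝ :=
  ∑ ω : EdgeIdx n → Bool, W p ω * Real.exp (t * (isolCount ω : ℝ))

/-- the abstract γ function -/
def gf (n : ℕ) (p : ℝ) (t : ℝ) : ℝ :=
  Real.exp t * (p * Real.exp t + 1 - p) ^ (n - 2) * ((n : ℝ) * p * Real.exp t + 1 - p)
    + ((n : ℝ) - 1) * p + 1

lemma L_hasDeriv (p : ℝ) (t : ℝ) :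
    HasDerivAt (Lfun p n)
      (∑ ω : EdgeIdx n → Bool,
        W p ω * (Real.exp (t * (isolCount ω : ℝ)) * (isolCount ω : ℝ))) t := by
  have h : ∀ ω ∈ (Finset.univ : Finset (EdgeIdx n → Bool)),
      HasDerivAt (fun t : ℝ => W p ω * Real.exp (t * (isolCount ω : ℝ)))
        (W p ω * (Real.exp (t * (isolCount ω : ℝ)) * (isolCount ω : ℝ))) t := by
    intro ω _
    have h1 : HasDerivAt (fun t : ℝ => t * (isolCount ω : ℝ)) (isolCount ω : ℝ) t := by
      simpa using (hasDerivAt_id t).mul_const (isolCount ω : ℝ)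
    exact (h1.exp).const_mul _
  exact HasDerivAt.fun_sum h

lemma L_nonneg {p : ℝ} (hp : p ∈ Set.Ioo (0:ℝ) 1) (t : ℝ) : 0 ≤ Lfun p n t :=
  Finset.sum_nonneg fun ω _ => mul_nonneg (W_nonneg hp ω) (Real.exp_pos _).le

set_option maxHeartbeats 2000000 in
lemma key_ineq (hn : 2 ≤ n) {p : ℝ} (hp : p ∈ Set.Ioo (0:ℝ) 1) {t : ℝ} (ht : 0 ≤ t) :
    ∑ ω : EdgeIdx n → Bool,
        W p ω * (Real.exp (t * (isolCount ω : ℝ)) * (isolCount ω : ℝ))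
      ≤ (n : ℝ) * (1 - p) ^ (n - 1) * ((1 + t / 2 * gf n p t) * Lfun p n t) := by
  have hY : ∀ ω : EdgeIdx n → Bool,
      (isolCount ω : ℝ) = ∑ v : Fin n, (if deg ω v = 0 then (1:ℝ) else 0) := by
    intro ω
    rw [isolCount, Finset.card_filter]
    push_cast
    rfl
  have hswap : ∑ ω : EdgeIdx n → Bool,
      W p ω * (Real.exp (t * (isolCount ω : ℝ)) * (isolCount ω : ℝ))
      = ∑ v : Fin n, ∑ ω : EdgeIdx n → Bool,
          W p ω * (Real.exp (t * (isolCount ω : ℝ)) * (if deg ω v = 0 then (1:ℝ) else 0)) := by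
    rw [Finset.sum_comm]
    refine Finset.sum_congr rfl fun ω _ => ?_
    rw [hY ω, Finset.mul_sum, Finset.mul_sum]
  rw [hswap]
  have hterm : ∀ v : Fin n, ∑ ω : EdgeIdx n → Bool,
      W p ω * (Real.exp (t * (isolCount ω : ℝ)) * (if deg ω v = 0 then (1:ℝ) else 0))
      ≤ (1 - p) ^ (n - 1) * ((1 + t / 2 * gf n p t) * Lfun p n t) := by
    intro v
    -- rewrite as product form and delete
    have hpt : ∀ ω : EdgeIdx n → Bool,
        Real.exp (t * (isolCount ω : ℝ)) * (if deg ω v = 0 then (1:ℝ) else 0)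
        = (∏ e ∈ Sv v, if ω e = false then (1:ℝ) else 0)
            * Real.exp (t * (isolCountDel ω v : ℝ)) := by
      intro ω
      by_cases hdeg : deg ω v = 0
      · rw [if_pos hdeg, isolCountDel_eq_of_deg_zero hdeg]
        have : ∀ e ∈ Sv v, (if ω e = false then (1:ℝ) else 0) = 1 := by
          intro e he
          rw [if_pos ((deg_zero_iff ω v).mp hdeg e he)]
        rw [Finset.prod_congr rfl this, Finset.prod_const_one]
        ring
      · rw [if_neg hdeg]
        have : ∃ e ∈ Sv v, ω e ≠ false := by
          by_contra hcon
          push_neg at hcon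
          exact hdeg ((deg_zero_iff ω v).mpr hcon)
        obtain ⟨e, he, hne⟩ := this
        rw [Finset.prod_eq_zero he (show (if ω e = false then (1:ℝ) else 0) = 0 from if_neg hne)]
        ring
    have hstep1 : ∑ ω : EdgeIdx n → Bool,
        W p ω * (Real.exp (t * (isolCount ω : ℝ)) * (if deg ω v = 0 then (1:ℝ) else 0))
        = (1 - p) ^ (n - 1) * ∑ ω : EdgeIdx n → Bool,
            W p ω * Real.exp (t * (isolCountDel ω v : ℝ)) := by
      simp_rw [hpt]
      rw [sum_ind_invariant p (Sv v) (fun ω => Real.exp (t * (isolCountDel ω v : ℝ)))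
        (fun ω e he b => by
          rw [isolCountDel_update he b]), card_Sv hn]
    rw [hstep1]
    apply mul_le_mul_of_nonneg_left ?_ (pow_nonneg (by linarith [hp.2]) _)
    -- main estimate
    have hpt2 : ∀ ω : EdgeIdx n → Bool,
        Real.exp (t * (isolCountDel ω v : ℝ))
        ≤ Real.exp (t * (isolCount ω : ℝ))
          + t / 2 * ((((deg ω v : ℝ) + 1) * (Real.exp (t * ((deg ω v : ℝ) + 1)) + 1))
              * Real.exp (t * (isolCount ω : ℝ))) := by
      intro ω
      have h1 : (isolCount ω : ℝ) ≤ (isolCountDel ω v : ℝ) := by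
        exact_mod_cast isolCount_le_del ω v
      have h2 : (isolCountDel ω v : ℝ) ≤ (isolCount ω : ℝ) + ((deg ω v : ℝ) + 1) := by
        have := isolCountDel_le ω v
        push_cast
        exact_mod_cast this
      have := exp_bound ht h1 h2 (by positivity)
      linarith [this]
    have hsum2 : ∑ ω : EdgeIdx n → Bool, W p ω * Real.exp (t * (isolCountDel ω v : ℝ))
        ≤ Lfun p n t + t / 2 * ∑ ω : EdgeIdx n → Bool,
            W p ω * ((((deg ω v : ℝ) + 1) * (Real.exp (t * ((deg ω v : ℝ) + 1)) + 1))
              * Real.exp (t * (isolCount ω : ℝ))) := by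
      have := Finset.sum_le_sum (fun ω (_ : ω ∈ Finset.univ) =>
        mul_le_mul_of_nonneg_left (hpt2 ω) (W_nonneg hp ω))
      calc ∑ ω : EdgeIdx n → Bool, W p ω * Real.exp (t * (isolCountDel ω v : ℝ))
          ≤ _ := this
        _ = Lfun p n t + t / 2 * ∑ ω : EdgeIdx n → Bool,
            W p ω * ((((deg ω v : ℝ) + 1) * (Real.exp (t * ((deg ω v : ℝ) + 1)) + 1))
              * Real.exp (t * (isolCount ω : ℝ))) := by
            rw [Lfun, Finset.mul_sum, ← Finset.sum_add_distrib]
            refine Finset.sum_congr rfl fun ω _ => ?_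
            ring
    have hharris : ∑ ω : EdgeIdx n → Bool,
        W p ω * ((((deg ω v : ℝ) + 1) * (Real.exp (t * ((deg ω v : ℝ) + 1)) + 1))
          * Real.exp (t * (isolCount ω : ℝ)))
        ≤ gf n p t * Lfun p n t := by
      have hH := harris hp
        (fun ω => ((deg ω v : ℝ) + 1) * (Real.exp (t * ((deg ω v : ℝ) + 1)) + 1))
        (fun ω => Real.exp (t * (isolCount ω : ℝ)))
        (fun ω => by positivity) (fun ω => (Real.exp_pos _).le)
        (fun ω₁ ω₂ h12 => by
          dsimp only
          have hd : (deg ω₁ v : ℝ) ≤ (deg ω₂ v : ℝ) := by exact_mod_cast deg_mono h12 v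
          have he : Real.exp (t * ((deg ω₁ v : ℝ) + 1)) ≤ Real.exp (t * ((deg ω₂ v : ℝ) + 1)) := by
            apply Real.exp_le_exp.mpr
            nlinarith
          have h1 : (0:ℝ) ≤ (deg ω₁ v : ℝ) + 1 := by positivity
          nlinarith [Real.exp_pos (t * ((deg ω₁ v : ℝ) + 1))])
        (fun ω₁ ω₂ h12 => by
          dsimp only
          apply Real.exp_le_exp.mpr
          have : (isolCount ω₂ : ℝ) ≤ (isolCount ω₁ : ℝ) := by
            exact_mod_cast isolCount_anti h12
          nlinarith)
      rw [gamma_moment hn p v t] at hH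
      exact hH
    have ht2 : (0:ℝ) ≤ t / 2 := by positivity
    calc ∑ ω : EdgeIdx n → Bool, W p ω * Real.exp (t * (isolCountDel ω v : ℝ))
        ≤ _ := hsum2
      _ ≤ Lfun p n t + t / 2 * (gf n p t * Lfun p n t) := by
          have := mul_le_mul_of_nonneg_left hharris ht2
          linarith
      _ = (1 + t / 2 * gf n p t) * Lfun p n t := by ring
  calc ∑ v : Fin n, ∑ ω : EdgeIdx n → Bool,
      W p ω * (Real.exp (t * (isolCount ω : ℝ)) * (if deg ω v = 0 then (1:ℝ) else 0))
      ≤ ∑ _v : Fin n, (1 - p) ^ (n - 1) * ((1 + t / 2 * gf n p t) * Lfun p n t) :=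
        Finset.sum_le_sum fun v _ => hterm v
    _ = (n : ℝ) * (1 - p) ^ (n - 1) * ((1 + t / 2 * gf n p t) * Lfun p n t) := by
        rw [Finset.sum_const, Finset.card_univ, Fintype.card_fin, nsmul_eq_mul]
        ring

end Part7
set_option maxHeartbeats 2000000 in
/-- the mgf of the standardized number of isolated vertices satisfies
`M(θ) ≤ exp (H θ)` for `θ ≥ 0`. -/
theorem mgf_bound_nonneg (n : ℕ) (hn : 2 ≤ n) (p : ℝ) (hp : p ∈ Set.Ioo (0 : ℝ) 1)
    (μ σ : ℝ) (hμ : μ = (n : ℝ) * (1 - p) ^ (n - 1))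
    (hσ : σ = Real.sqrt ((n : ℝ) * (1 - p) ^ (n - 1)
      * (1 + (n : ℝ) * p * (1 - p) ^ (n - 2) - (1 - p) ^ (n - 2))))
    (γ : ℝ → ℝ)
    (hγ : ∀ s, γ s = Real.exp s * (p * Real.exp s + 1 - p) ^ (n - 2)
      * ((n : ℝ) * p * Real.exp s + 1 - p) + ((n : ℝ) - 1) * p + 1)
    (H : ℝ → ℝ) (hH : ∀ θ, H θ = μ / (2 * σ ^ 2) * ∫ s in (0 : ℝ)..θ, s * γ (s / σ))
    (M : ℝ → ℝ)
    (hM : ∀ θ, M θ = ∫ ω, Real.exp (θ * ((isolCount ω : ℝ) - μ) / σ) ∂(gnp n p)) :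
    ∀ θ, 0 ≤ θ → M θ ≤ Real.exp (H θ) := by
  obtain ⟨hp0, hp1⟩ := hp
  have hq0 : (0:ℝ) < 1 - p := by linarith
  have hn2 : (2:ℝ) ≤ (n:ℝ) := by exact_mod_cast hn
  -- positivity of the variance
  have hS : 0 < (n : ℝ) * (1 - p) ^ (n - 1)
      * (1 + (n : ℝ) * p * (1 - p) ^ (n - 2) - (1 - p) ^ (n - 2)) := by
    have h1 : (1 - p) ^ (n - 2) ≤ 1 := pow_le_one₀ hq0.le (by linarith)
    have hn0 : (0:ℝ) < (n:ℝ) := by linarith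
    have h2 : (0:ℝ) < (n : ℝ) * p * (1 - p) ^ (n - 2) :=
      mul_pos (mul_pos hn0 hp0) (pow_pos hq0 _)
    have h3 : (0:ℝ) < (n : ℝ) * (1 - p) ^ (n - 1) :=
      mul_pos hn0 (pow_pos hq0 _)
    nlinarith
  have hσpos : 0 < σ := by
    rw [hσ]
    exact Real.sqrt_pos.mpr hS
  have hσne : σ ≠ 0 := ne_of_gt hσpos
  have hγgf : ∀ s, γ s = gf n p s := by
    intro s
    rw [hγ s]
    rfl
  -- continuity
  have hγcont : Continuous γ := by
    have hfun : γ = fun s => Real.exp s * (p * Real.exp s + 1 - p) ^ (n - 2)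
        * ((n : ℝ) * p * Real.exp s + 1 - p) + ((n : ℝ) - 1) * p + 1 := funext hγ
    rw [hfun]
    have c1 : Continuous fun s : ℝ => p * Real.exp s + 1 - p :=
      ((continuous_const.mul Real.continuous_exp).add continuous_const).sub continuous_const
    have c2 : Continuous fun s : ℝ => (n:ℝ) * p * Real.exp s + 1 - p :=
      ((continuous_const.mul Real.continuous_exp).add continuous_const).sub continuous_const
    exact (((Real.continuous_exp.mul (c1.pow _)).mul c2).add continuous_const).add
      continuous_const
  have hφcont : Continuous (fun s : ℝ => s * γ (s / σ)) :=
    continuous_id.mul (hγcont.comp (continuous_id.div_const σ))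
  -- derivative of H
  have hHder : ∀ x : ℝ, HasDerivAt H (μ / (2 * σ ^ 2) * (x * γ (x / σ))) x := by
    intro x
    have h1 : HasDerivAt (fun u : ℝ => ∫ s in (0:ℝ)..u, s * γ (s / σ)) (x * γ (x / σ)) x :=
      intervalIntegral.integral_hasDerivAt_right (hφcont.intervalIntegrable _ _)
        (hφcont.stronglyMeasurableAtFilter _ _) hφcont.continuousAt
    have h2 : H = fun u : ℝ => μ / (2 * σ ^ 2) * ∫ s in (0:ℝ)..u, s * γ (s / σ) := funext hH
    rw [h2]
    exact h1.const_mul _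
  -- M in terms of Lfun
  have hMeq : ∀ θ : ℝ, M θ = Real.exp (-(θ * μ) / σ) * Lfun p n (θ / σ) := by
    intro θ'
    rw [hM θ', integral_gnp ⟨hp0, hp1⟩, Lfun, Finset.mul_sum]
    refine Finset.sum_congr rfl fun ω _ => ?_
    have hexp : θ' * ((isolCount ω : ℝ) - μ) / σ
        = -(θ' * μ) / σ + (θ' / σ) * (isolCount ω : ℝ) := by
      field_simp
      ring
    rw [hexp, Real.exp_add]
    ring
  -- the auxiliary function ψ
  set K : ℝ → ℝ := fun θ => H θ + θ * μ / σ with hK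
  set ψ : ℝ → ℝ := fun θ => Lfun p n (θ / σ) * Real.exp (-(K θ)) with hψ
  have hψd : ∀ x : ℝ, HasDerivAt ψ
      ((∑ ω : EdgeIdx n → Bool,
          W p ω * (Real.exp ((x / σ) * (isolCount ω : ℝ)) * (isolCount ω : ℝ))) * (1 / σ)
          * Real.exp (-(K x))
        + Lfun p n (x / σ)
            * (Real.exp (-(K x)) * (-(μ / (2 * σ ^ 2) * (x * γ (x / σ)) + μ / σ)))) x := by
    intro x
    have hLd : HasDerivAt (fun θ : ℝ => Lfun p n (θ / σ))
        ((∑ ω : EdgeIdx n → Bool,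
          W p ω * (Real.exp ((x / σ) * (isolCount ω : ℝ)) * (isolCount ω : ℝ))) * (1 / σ)) x :=
      by have h1 := HasDerivAt.comp x (L_hasDeriv (n := n) p (x / σ)) ((hasDerivAt_id' x).div_const σ); exact h1
    have hKd : HasDerivAt K (μ / (2 * σ ^ 2) * (x * γ (x / σ)) + μ / σ) x := by
      refine (hHder x).add ?_
      have := ((hasDerivAt_id x).mul_const μ).div_const σ
      simpa using this
    have hexpd : HasDerivAt (fun θ : ℝ => Real.exp (-(K θ)))
        (Real.exp (-(K x)) * (-(μ / (2 * σ ^ 2) * (x * γ (x / σ)) + μ / σ))) x :=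
      hKd.neg.exp
    exact hLd.mul hexpd
  -- derivative nonpositive on the interior
  have hderiv_nonpos : ∀ x : ℝ, 0 < x → deriv ψ x ≤ 0 := by
    intro x hx
    rw [(hψd x).deriv]
    have ht0 : (0:ℝ) ≤ x / σ := by positivity
    have hkey := key_ineq hn ⟨hp0, hp1⟩ ht0
    have hL0 := L_nonneg (n := n) ⟨hp0, hp1⟩ (x / σ)
    set Ld := ∑ ω : EdgeIdx n → Bool,
      W p ω * (Real.exp ((x / σ) * (isolCount ω : ℝ)) * (isolCount ω : ℝ)) with hLdDef
    set Lv := Lfun p n (x / σ) with hLv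
    have heq : (n : ℝ) * (1 - p) ^ (n - 1) * ((1 + (x / σ) / 2 * gf n p (x / σ)) * Lv) * (1 / σ)
        = (μ / (2 * σ ^ 2) * (x * γ (x / σ)) + μ / σ) * Lv := by
      rw [hγgf, hμ]
      field_simp
      ring
    have h7 : Ld * (1 / σ) ≤ (μ / (2 * σ ^ 2) * (x * γ (x / σ)) + μ / σ) * Lv := by
      rw [← heq]
      apply mul_le_mul_of_nonneg_right hkey
      positivity
    have hepos := Real.exp_pos (-(K x))
    nlinarith [mul_le_mul_of_nonneg_right h7 hepos.le]
  -- ψ is antitone on [0, ∞)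
  have hψdiff : Differentiable ℝ ψ := fun x => (hψd x).differentiableAt
  have hanti : AntitoneOn ψ (Set.Ici 0) := by
    apply antitoneOn_of_deriv_nonpos (convex_Ici 0) hψdiff.continuous.continuousOn
      (fun x _ => hψdiff.differentiableAt.differentiableWithinAt)
    intro x hx
    rw [interior_Ici] at hx
    exact hderiv_nonpos x hx
  -- value at 0
  have hψ0 : ψ 0 = 1 := by
    have hL00 : Lfun p n ((0:ℝ) / σ) = 1 := by
      rw [zero_div, Lfun]
      have : ∀ ω : EdgeIdx n → Bool, W p ω * Real.exp ((0:ℝ) * (isolCount ω : ℝ)) = W p ω := by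
        intro ω
        rw [zero_mul, Real.exp_zero, mul_one]
      rw [Finset.sum_congr rfl fun ω _ => this ω]
      exact sum_W p
    have hK0 : K 0 = 0 := by
      simp only [hK, hH 0, intervalIntegral.integral_same, mul_zero, zero_mul, zero_div, add_zero]
    rw [hψ]
    simp only
    rw [hL00, hK0]
    simp
  intro θ hθ
  have hψθ : ψ θ ≤ 1 := by
    rw [← hψ0]
    exact hanti (Set.mem_Ici.mpr le_rfl) (Set.mem_Ici.mpr hθ) hθ
  have hLle : Lfun p n (θ / σ) ≤ Real.exp (K θ) := by
    have hepos := Real.exp_pos (K θ)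
    have : ψ θ = Lfun p n (θ / σ) * Real.exp (-(K θ)) := rfl
    rw [this] at hψθ
    rw [Real.exp_neg] at hψθ
    calc Lfun p n (θ / σ) = Lfun p n (θ / σ) * (Real.exp (K θ))⁻¹ * Real.exp (K θ) := by
          field_simp
      _ ≤ 1 * Real.exp (K θ) := mul_le_mul_of_nonneg_right hψθ hepos.le
      _ = Real.exp (K θ) := one_mul _
  rw [hMeq θ]
  calc Real.exp (-(θ * μ) / σ) * Lfun p n (θ / σ)
      ≤ Real.exp (-(θ * μ) / σ) * Real.exp (K θ) :=
        mul_le_mul_of_nonneg_left hLle (Real.exp_pos _).le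
    _ = Real.exp (H θ) := by
        rw [← Real.exp_add]
        congr 1
        simp only [hK]
        field_simp
        ring

end ErdosRenyiIsolated
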